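/- With V_n and P_n as above, for all n ≥ 0: P_n = Σ_{i=0}^{n} (−1)^{n−i} · ([2i+2]/[n+i+2]) · [2n+1 choose n+1+i] · V_i, where [i] = (v^i − v^{−i})/(v − v^{−1}) and [a choose b] is the balanced q-binomial coefficient. -/

import Mathlib

/-- `v`, an indeterminate, as an element of the field `ℚ(v)` of rational functions. -/
noncomputable def vv : RatFunc ℚ := RatFunc.X

/-- The balanced `q`-integer `{m} = v^m - v^{-m}`. -/
noncomputable def bk (m : ℤ) : RatFunc ℚ := vv ^ m - vv ^ (-m)

/-- The falling product `{a}_i = {a}{a-1}⋯{a-i+1}`. -/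
noncomputable def bkp (a : ℤ) (i : ℕ) : RatFunc ℚ := ∏ j ∈ Finset.range i, bk (a - j)

/-- The balanced factorial `{n}! = {n}{n-1}⋯{1}`. -/
noncomputable def bfact (n : ℕ) : RatFunc ℚ := bkp n n

/-- The balanced binomial coefficient `[a choose b] = {a}_b / {b}!`. -/
noncomputable def bbinom (a : ℤ) (b : ℕ) : RatFunc ℚ := bkp a b / bfact b

/-- Chebyshev-type polynomials `V_0 = 1`, `V_1 = x`, `V_n = x V_{n-1} - V_{n-2}`. -/
noncomputable def chebV : ℕ → Polynomial (RatFunc ℚ)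
  | 0 => 1
  | 1 => Polynomial.X
  | (n + 2) => Polynomial.X * chebV (n + 1) - chebV n

/-- `P_n = ∏_{i=0}^{n-1} (x - v^{2i+1} - v^{-2i-1})`. -/
noncomputable def PP (n : ℕ) : Polynomial (RatFunc ℚ) :=
  ∏ i ∈ Finset.range n,
    (Polynomial.X - Polynomial.C (vv ^ (2 * i + 1) + vv ^ (-(2 * (i : ℤ) + 1))))

/-! ### Auxiliary definitions and lemmas -/

lemma vv_ne_zero : vv ≠ 0 := RatFunc.X_ne_zero

lemma vv_pow_ne_one (k : ℕ) (hk : k ≠ 0) : vv ^ k ≠ 1 := by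
  intro h'
  have : (Polynomial.X : Polynomial ℚ) ^ k = 1 := by
    apply RatFunc.algebraMap_injective ℚ
    rw [map_pow, map_one, RatFunc.algebraMap_X]; exact h'
  have := congrArg Polynomial.natDegree this
  simp [Polynomial.natDegree_X_pow] at this
  exact hk this

lemma vv_zpow_eq_one {t : ℤ} (h : vv ^ t = 1) : t = 0 := by
  rcases lt_trichotomy t 0 with ht | ht | ht
  · exfalso
    have h' : vv ^ ((-t).toNat) = 1 := by
      rw [← zpow_natCast, Int.toNat_of_nonneg (by omega)]
      rw [zpow_neg, h, inv_one]
    exact vv_pow_ne_one _ (by omega) h'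
  · exact ht
  · exfalso
    have h' : vv ^ (t.toNat) = 1 := by
      rw [← zpow_natCast, Int.toNat_of_nonneg ht.le]; exact h
    exact vv_pow_ne_one _ (by omega) h'

lemma bk_zero : bk 0 = 0 := by simp [bk]

lemma bk_ne_zero {m : ℤ} (hm : m ≠ 0) : bk m ≠ 0 := by
  intro h
  have h1 : vv ^ m = vv ^ (-m) := sub_eq_zero.mp h
  have h2 : vv ^ (m + m) = 1 := by
    rw [zpow_add₀ vv_ne_zero]
    nth_rewrite 1 [h1]
    rw [← zpow_add₀ vv_ne_zero, neg_add_cancel, zpow_zero]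
  have := vv_zpow_eq_one h2
  omega

lemma bkn_ne_zero {m : ℕ} (hm : m ≠ 0) : bk (m : ℕ) ≠ 0 :=
  bk_ne_zero (by exact_mod_cast hm)

lemma bfact_def (n : ℕ) : bfact n = bkp n n := rfl

lemma bkp_succ (a : ℤ) (i : ℕ) : bkp a (i + 1) = bk a * bkp (a - 1) i := by
  rw [bkp, Finset.prod_range_succ']
  simp only [Nat.cast_zero, sub_zero]
  rw [mul_comm, bkp]
  congr 1
  apply Finset.prod_congr rfl
  intro j _
  congr 1
  push_cast; ring

lemma bfact_succ (n : ℕ) : bfact (n + 1) = bk ((n + 1 : ℕ)) * bfact n := by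
  rw [bfact_def, bkp_succ, bfact_def]
  congr 2
  push_cast; ring

lemma bfact_eq (m k : ℕ) (h : m = k + 1) : bfact m = bk ((k + 1 : ℕ)) * bfact k := by
  subst h; exact bfact_succ k

lemma bfact_ne_zero (n : ℕ) : bfact n ≠ 0 := by
  induction n with
  | zero => simp [bfact, bkp]
  | succ k ih =>
    rw [bfact_succ]
    exact mul_ne_zero (bkn_ne_zero (Nat.succ_ne_zero k)) ih

lemma bkp_add (a : ℤ) (b c : ℕ) : bkp a (b + c) = bkp a b * bkp (a - b) c := by
  rw [bkp, Finset.prod_range_add, bkp, bkp]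
  congr 1
  apply Finset.prod_congr rfl
  intro j _
  congr 1
  push_cast; ring

lemma bk_nat (e : ℕ) : bk e = (vv ^ e * vv ^ e - 1) / vv ^ e := by
  rw [bk, ← zpow_natCast vv e, zpow_neg,
    eq_div_iff (zpow_ne_zero _ vv_ne_zero), sub_mul,
    inv_mul_cancel₀ (zpow_ne_zero _ vv_ne_zero)]

lemma vneg_nat (e : ℕ) : vv ^ (-(e : ℤ)) = 1 / vv ^ e := by
  rw [zpow_neg, one_div, zpow_natCast]

set_option maxHeartbeats 2000000 in
lemma core_nat (j d : ℕ) :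
    bk (2*j+2 : ℕ) * bk (2*(j+d)+3 : ℕ) * bk (2*(j+d)+2 : ℕ) =
    bk (2*j+4 : ℕ) * bk (d+1 : ℕ) * bk (d : ℕ)
    + bk (2*j : ℕ) * bk (2*j+d+3 : ℕ) * bk (2*j+d+2 : ℕ)
    + (vv^(2*(j+d)+1) + vv^(-((2*(j+d)+1 : ℕ) : ℤ)))
      * (bk (2*j+2 : ℕ) * bk (2*j+d+3 : ℕ) * bk (d+1 : ℕ)) := by
  have hv := vv_ne_zero
  rw [vneg_nat]
  simp only [bk_nat, two_mul, pow_add, pow_one]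
  set p := vv ^ j with hp'
  set q := vv ^ d with hq'
  have hp : p ≠ 0 := pow_ne_zero _ hv
  have hq : q ≠ 0 := pow_ne_zero _ hv
  clear_value p q
  clear hp' hq'
  field_simp
  ring

lemma core' (j d u1 u2 u3 u4 b1 b2 b3 e : ℕ)
    (h1 : u1 = 2*(j+d)+3) (h2 : u2 = 2*(j+d)+2) (h3 : u3 = 2*j+d+3) (h4 : u4 = 2*j+d+2)
    (hb1 : b1 = 2*j+2) (hb2 : b2 = 2*j) (hb3 : b3 = 2*j+4) (he : e = 2*(j+d)+1) :
    bk (b1 : ℕ) * bk (u1 : ℕ) * bk (u2 : ℕ) =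
    bk (b3 : ℕ) * bk (d+1 : ℕ) * bk (d : ℕ) + bk (b2 : ℕ) * bk (u3 : ℕ) * bk (u4 : ℕ)
    + (vv^e + vv^(-(e : ℤ))) * (bk (b1 : ℕ) * bk (u3 : ℕ) * bk (d+1 : ℕ)) := by
  subst h1 h2 h3 h4 hb1 hb2 hb3 he
  exact core_nat j d

/-- The coefficients occurring in the statement. -/
noncomputable def cc (n i : ℕ) : RatFunc ℚ :=
  (-1 : RatFunc ℚ) ^ (n - i) * (bk (2 * i + 2) / bk ((n : ℤ) + i + 2)) *
    bbinom (2 * n + 1) (n + 1 + i)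

/-- The shifted coefficients. -/
noncomputable def dd (n : ℕ) : ℕ → RatFunc ℚ
  | 0 => 0
  | (j+1) => cc n j

/-- Shifted Chebyshev-type polynomials. -/
noncomputable def chebW : ℕ → Polynomial (RatFunc ℚ)
  | 0 => 0
  | (j+1) => chebV j

lemma cc_vanish (n i : ℕ) (h : n < i) : cc n i = 0 := by
  have hz : bkp (2*(n:ℤ)+1) (n+1+i) = 0 := by
    rw [bkp]
    apply Finset.prod_eq_zero (i := 2*n+1) (Finset.mem_range.mpr (by omega))
    have harg : (2*(n:ℤ)+1 - ((2*n+1 : ℕ) : ℤ)) = 0 := by push_cast; ring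
    rw [harg, bk_zero]
  rw [cc, bbinom, hz]
  simp

lemma cc_diag (m : ℕ) : cc m m = 1 := by
  have h1 : bkp (2*(m:ℤ)+1) (m+1+m) = bfact (m+1+m) := by
    rw [bfact_def]
    congr 1
    omega
  rw [cc, bbinom, h1]
  rw [show ((m:ℤ) + m + 2) = 2*(m:ℤ) + 2 by ring]
  rw [div_self (bfact_ne_zero _), div_self (bk_ne_zero (by omega))]
  simp

lemma cc_closed (n i a b c s : ℕ) (h : i ≤ n) (ha : a = 2*n+1) (hb : b = n+i+2)
    (hc : c = n-i) (hs : s = n-i) :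
    cc n i = (-1 : RatFunc ℚ)^s * bk ((2*i+2 : ℕ)) * bfact a / (bfact b * bfact c) := by
  subst ha hb hc hs
  have hK : bkp (2*(n:ℤ)+1) (n+1+i) = bfact (2*n+1) / bfact (n-i) := by
    have e1 : bfact (2*n+1) = bkp (2*(n:ℤ)+1) ((n+1+i)+(n-i)) := by
      rw [bfact_def]
      congr 1 <;> omega
    rw [bkp_add] at e1
    have e2 : (2*(n:ℤ)+1 - ((n+1+i : ℕ) : ℤ)) = ((n-i : ℕ) : ℤ) := by
      rw [Nat.cast_sub h]; push_cast; ring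
    rw [e2, ← bfact_def] at e1
    rw [e1, mul_div_assoc, div_self (bfact_ne_zero _), mul_one]
  have hF : bfact (n+i+2) = bk ((n:ℤ)+i+2) * bfact (n+1+i) := by
    rw [bfact_eq (n+i+2) (n+1+i) (by omega)]
    congr 2
    push_cast; ring
  rw [cc, bbinom, hK, hF]
  rw [show ((2*i+2 : ℕ) : ℤ) = 2*(i:ℤ)+2 by push_cast; ring]
  have h2 : bk ((n:ℤ)+i+2) ≠ 0 := bk_ne_zero (by positivity)
  field_simp

lemma dd_closed (n j a b c s : ℕ) (h : j ≤ n) (ha : a = 2*n+1) (hb : b = n+j+1)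
    (hc : c = n+1-j) (hs : s = n+1-j) :
    dd n j = (-1 : RatFunc ℚ)^s * bk ((2*j : ℕ)) * bfact a / (bfact b * bfact c) := by
  subst ha hb hc hs
  cases j with
  | zero => norm_num [dd, bk_zero]
  | succ k =>
    rw [show dd n (k+1) = cc n k from rfl]
    rw [show n+1-(k+1) = n-k by omega, show n+(k+1)+1 = n+k+2 by omega,
      show 2*(k+1) = 2*k+2 by omega]
    exact cc_closed n k _ _ _ _ (by omega) rfl rfl rfl rfl

lemma cc_succ_closed (n j a b c s d : ℕ) (h : j ≤ n) (ha : a = 2*n+1) (hb : b = n+j+3)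
    (hc : c = n+1-j) (hs : s = n+1-j) (hd : d = n-j) :
    cc n (j+1) = (-1 : RatFunc ℚ)^s *
      (bk ((2*j+4 : ℕ)) * (bk ((d+1 : ℕ)) * bk ((d : ℕ)))) * bfact a /
      (bfact b * bfact c) := by
  subst ha hb hc hs
  rcases eq_or_lt_of_le h with rfl | hlt
  · rw [cc_vanish j (j+1) (by omega)]
    rw [show d = 0 by omega]
    norm_num [bk_zero]
  · have hw : d = (n-j-1)+1 := by omega
    set w := n - j - 1 with hwdef
    rw [cc_closed n (j+1) (2*n+1) (n+j+3) w w (by omega) rfl (by omega) (by omega) (by omega)]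
    rw [show n+1-j = w+2 by omega, hw]
    rw [bfact_eq (w+2) (w+1) (by omega), bfact_eq (w+1) w (by omega)]
    rw [show 2*(j+1)+2 = 2*j+4 by omega, show w+1+1 = w+2 by omega]
    have n1 : bk ((w+2 : ℕ)) ≠ 0 := bkn_ne_zero (by omega)
    have n2 : bk ((w+1 : ℕ)) ≠ 0 := bkn_ne_zero (by omega)
    have n3 : bfact w ≠ 0 := bfact_ne_zero w
    have n4 : bfact (n+j+3) ≠ 0 := bfact_ne_zero _
    rw [pow_add]
    rw [div_eq_div_iff (mul_ne_zero n4 n3)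
      (mul_ne_zero n4 (mul_ne_zero n1 (mul_ne_zero n2 n3)))]
    ring

lemma key (n j : ℕ) (hj : j ≤ n + 1) :
    cc (n+1) j = dd n j + cc n (j+1)
      - (vv^(2*n+1) + vv^(-(2*(n:ℤ)+1))) * cc n j := by
  have hcast : (-(2*(n:ℤ)+1)) = (-((2*n+1 : ℕ) : ℤ)) := by push_cast; ring
  rw [hcast]
  rcases Nat.lt_or_ge j (n+1) with hlt | hge
  · have hj' : j ≤ n := by omega
    obtain ⟨d, hd⟩ : ∃ d, n = j + d := ⟨n - j, by omega⟩
    have hA := cc_closed (n+1) j (2*n+3) (n+j+3) (n+1-j) (n+1-j) (by omega) (by omega)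
      (by omega) (by omega) (by omega)
    have hB := dd_closed n j (2*n+1) (n+j+1) (n+1-j) (n+1-j) hj' rfl rfl rfl rfl
    have hC := cc_succ_closed n j (2*n+1) (n+j+3) (n+1-j) (n+1-j) d hj' rfl rfl rfl rfl
      (by omega)
    have hD := cc_closed n j (2*n+1) (n+j+2) d (n-j) hj' rfl rfl (by omega) rfl
    rw [hA, hB, hC, hD]
    rw [bfact_eq (2*n+3) (2*n+2) (by omega), bfact_eq (2*n+2) (2*n+1) (by omega),
      bfact_eq (n+j+3) (n+j+2) (by omega), bfact_eq (n+j+2) (n+j+1) (by omega),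
      bfact_eq (n+1-j) d (by omega)]
    rw [show 2*n+2+1 = 2*n+3 by omega, show 2*n+1+1 = 2*n+2 by omega,
      show n+j+2+1 = n+j+3 by omega, show n+j+1+1 = n+j+2 by omega]
    rw [show n+1-j = (n-j)+1 by omega, pow_succ]
    -- abbreviations
    set S : RatFunc ℚ := (-1 : RatFunc ℚ)^(n-j) with hS
    set K := bfact (2*n+1) with hK
    set G := bfact (n+j+1) with hG
    set H := bfact d with hH
    set β : RatFunc ℚ := vv^(2*n+1) + vv^(-((2*n+1 : ℕ) : ℤ)) with hβ
    set B1 := bk ((2*j+2 : ℕ)) with hB1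
    set B2 := bk ((2*j : ℕ)) with hB2
    set B3 := bk ((2*j+4 : ℕ)) with hB3
    set B4 := bk ((d+1 : ℕ)) with hB4
    set B5 := bk ((d : ℕ)) with hB5
    set C1 := bk ((2*n+3 : ℕ)) with hC1
    set C2 := bk ((2*n+2 : ℕ)) with hC2
    set C3 := bk ((n+j+3 : ℕ)) with hC3
    set C4 := bk ((n+j+2 : ℕ)) with hC4
    have nC3 : C3 ≠ 0 := bkn_ne_zero (by omega)
    have nC4 : C4 ≠ 0 := bkn_ne_zero (by omega)
    have nB4 : B4 ≠ 0 := bkn_ne_zero (by omega)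
    have nG : G ≠ 0 := bfact_ne_zero _
    have nH : H ≠ 0 := bfact_ne_zero _
    set M : RatFunc ℚ := K / (C3 * (C4 * G) * (B4 * H)) with hM
    have HA : S * (-1) * B1 * (C1 * (C2 * K)) / (C3 * (C4 * G) * (B4 * H))
        = M * (S * (-1) * (B1 * C1 * C2)) := by
      rw [hM]; field_simp <;> ring
    have HB : S * (-1) * B2 * K / (G * (B4 * H))
        = M * (S * (-1) * (B2 * (C3 * C4))) := by
      rw [hM]; field_simp <;> ring
    have HC : S * (-1) * (B3 * (B4 * B5)) * K / (C3 * (C4 * G) * (B4 * H))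
        = M * (S * (-1) * (B3 * B4 * B5)) := by
      rw [hM]; field_simp <;> ring
    have HD : β * (S * B1 * K / (C4 * G * H))
        = -(M * (S * (-1) * (β * (B1 * C3 * B4)))) := by
      rw [hM]; field_simp <;> ring
    rw [HA, HB, HC, HD]
    have hcore := core' j d (2*n+3) (2*n+2) (n+j+3) (n+j+2) (2*j+2) (2*j) (2*j+4) (2*n+1)
      (by omega) (by omega) (by omega) (by omega) rfl rfl rfl (by omega)
    rw [← hB1, ← hB2, ← hB3, ← hB4, ← hB5, ← hC1, ← hC2, ← hC3, ← hC4, ← hβ] at hcore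
    linear_combination (M * (S * (-1))) * hcore
  · have hj2 : j = n + 1 := by omega
    subst hj2
    rw [cc_vanish n (n+1+1) (by omega), cc_vanish n (n+1) (by omega)]
    rw [show dd n (n+1) = cc n n from rfl]
    rw [cc_diag, cc_diag]
    ring

lemma chebX (i : ℕ) : Polynomial.X * chebV i = chebV (i+1) + chebW i := by
  cases i with
  | zero => simp [chebV, chebW]
  | succ k =>
    show Polynomial.X * chebV (k+1) = chebV (k+2) + chebV k
    rw [chebV]
    ring

lemma main_sum (m : ℕ) :
    PP m = ∑ i ∈ Finset.range (m+1), Polynomial.C (cc m i) * chebV i := by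
  induction m with
  | zero =>
    simp [PP, Finset.sum_range_one, cc_diag, chebV]
  | succ k ih =>
    have hPP : PP (k+1) = PP k *
        (Polynomial.X - Polynomial.C (vv ^ (2*k+1) + vv ^ (-(2*(k:ℤ)+1)))) := by
      rw [PP, Finset.prod_range_succ, ← PP]
    set β : RatFunc ℚ := vv ^ (2*k+1) + vv ^ (-(2*(k:ℤ)+1)) with hβ
    rw [hPP, ih, Finset.sum_mul]
    have hterm : ∀ i ∈ Finset.range (k+1),
        (Polynomial.C (cc k i) * chebV i) * (Polynomial.X - Polynomial.C β)
        = Polynomial.C (cc k i) * chebV (i+1) + Polynomial.C (cc k i) * chebW i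
          - Polynomial.C (β * cc k i) * chebV i := by
      intro i _
      have : (Polynomial.C (cc k i) * chebV i) * (Polynomial.X - Polynomial.C β)
          = Polynomial.C (cc k i) * (Polynomial.X * chebV i)
            - Polynomial.C (β * cc k i) * chebV i := by
        rw [Polynomial.C_mul]; ring
      rw [this, chebX]
      ring
    rw [Finset.sum_congr rfl hterm]
    rw [Finset.sum_sub_distrib, Finset.sum_add_distrib]
    have hS1 : ∑ i ∈ Finset.range (k+1), Polynomial.C (cc k i) * chebV (i+1)
        = ∑ j ∈ Finset.range (k+1+1), Polynomial.C (dd k j) * chebV j := by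
      rw [Finset.sum_range_succ' (fun j => Polynomial.C (dd k j) * chebV j) (k+1)]
      simp [dd]
    have hS2 : ∑ i ∈ Finset.range (k+1), Polynomial.C (cc k i) * chebW i
        = ∑ j ∈ Finset.range (k+1+1), Polynomial.C (cc k (j+1)) * chebV j := by
      rw [Finset.sum_range_succ' (fun i => Polynomial.C (cc k i) * chebW i) k]
      rw [Finset.sum_range_succ (fun j => Polynomial.C (cc k (j+1)) * chebV j) (k+1)]
      rw [Finset.sum_range_succ (fun j => Polynomial.C (cc k (j+1)) * chebV j) k]
      rw [cc_vanish k (k+1+1) (by omega), cc_vanish k (k+1) (by omega)]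
      simp [chebW]
    have hS3 : ∑ i ∈ Finset.range (k+1), Polynomial.C (β * cc k i) * chebV i
        = ∑ j ∈ Finset.range (k+1+1), Polynomial.C (β * cc k j) * chebV j := by
      rw [Finset.sum_range_succ (fun j => Polynomial.C (β * cc k j) * chebV j) (k+1)]
      rw [cc_vanish k (k+1) (by omega)]
      simp
    rw [hS1, hS2, hS3, ← Finset.sum_add_distrib, ← Finset.sum_sub_distrib]
    apply Finset.sum_congr rfl
    intro j hjmem
    have hj : j ≤ k + 1 := by
      have := Finset.mem_range.mp hjmem; omega
    have hk := key k j hj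
    rw [← hβ] at hk
    rw [hk, Polynomial.C_sub, Polynomial.C_add, Polynomial.C_mul]
    ring

theorem stmt4 (n : ℕ) :
    PP n = ∑ i ∈ Finset.range (n + 1),
      Polynomial.C ((-1 : RatFunc ℚ) ^ (n - i) * (bk (2 * i + 2) / bk ((n : ℤ) + i + 2)) *
          bbinom (2 * n + 1) (n + 1 + i)) * chebV i := by
  exact main_sum n
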